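/- The function f is non-decreasing on C, and f is continuous at a point c ∈ C if and only if c ∉ D; that is, the set of discontinuities of f : C → ℝ is exactly D = {d_n : n ∈ ℕ}. -/

import Mathlib

/-- `c` is a non-endpoint of the Cantor set: `c ∈ C` and for every `ε > 0` both
`(c - ε, c) ∩ C` and `(c, c + ε) ∩ C` are nonempty. -/
def IsNonEndpoint (c : ℝ) : Prop :=
  c ∈ cantorSet ∧ ∀ ε > 0,
    (Set.Ioo (c - ε) c ∩ cantorSet).Nonempty ∧ (Set.Ioo c (c + ε) ∩ cantorSet).Nonempty

/-- `f(c) = ∑_{n : d n < c} a n`. -/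
noncomputable def fFun (d a : ℕ → ℝ) (c : ℝ) : ℝ := ∑' n, if d n < c then a n else 0

/-- `F`, the closure in `ℝ²` of the graph `{(c, f c) : c ∈ C}`. -/
noncomputable def Fset (d a : ℕ → ℝ) : Set (ℝ × ℝ) :=
  closure {p : ℝ × ℝ | ∃ c ∈ cantorSet, p = (c, fFun d a c)}

lemma aux_summable (d a : ℕ → ℝ) (ha_pos : ∀ n, 0 < a n) (hA : Summable a) (x : ℝ) :
    Summable (fun n => if d n < x then a n else 0) := by
  refine Summable.of_nonneg_of_le (fun n => ?_) (fun n => ?_) hA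
  · split_ifs
    · exact (ha_pos n).le
    · exact le_refl 0
  · split_ifs
    · exact le_refl _
    · exact (ha_pos n).le

lemma aux_mono (d a : ℕ → ℝ) (ha_pos : ∀ n, 0 < a n) (hA : Summable a) {x y : ℝ}
    (hxy : x ≤ y) : fFun d a x ≤ fFun d a y := by
  apply Summable.tsum_le_tsum _ (aux_summable d a ha_pos hA x) (aux_summable d a ha_pos hA y)
  intro n
  split_ifs with h1 h2
  · exact le_refl _
  · exact absurd (lt_of_lt_of_le h1 hxy) h2
  · exact (ha_pos n).le
  · exact le_refl _

lemma aux_jump (d a : ℕ → ℝ) (ha_pos : ∀ n, 0 < a n) (hA : Summable a) (m : ℕ) {x : ℝ}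
    (hx : d m < x) : fFun d a (d m) + a m ≤ fFun d a x := by
  have hsm : Summable (fun n => if n = m then a m else 0) := summable_of_ne_finset_zero
    (s := {m}) (fun n hn => by simp at hn; simp [hn])
  have h1 : fFun d a (d m) + a m
      = ∑' n, ((if d n < d m then a n else 0) + if n = m then a m else 0) := by
    rw [Summable.tsum_add (aux_summable d a ha_pos hA (d m)) hsm, tsum_ite_eq m (fun _ => a m)]
    rfl
  rw [h1]
  apply Summable.tsum_le_tsum _ ((aux_summable d a ha_pos hA (d m)).add hsm)
    (aux_summable d a ha_pos hA x)
  intro n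
  by_cases hn : n = m
  · subst hn
    simp [lt_irrefl, hx]
  · simp only [hn, if_false, add_zero]
    split_ifs with h1' h2'
    · exact le_refl _
    · exact absurd (h1'.trans hx) h2'
    · exact (ha_pos n).le
    · exact le_refl _

lemma aux_diff_bound (d a : ℕ → ℝ) (ha_pos : ∀ n, 0 < a n) (hA : Summable a)
    (s : Finset ℕ) (ε : ℝ) (hs : ∀ t : Finset ℕ, Disjoint t s → ∑ n ∈ t, a n < ε)
    {u v : ℝ} (huv : u ≤ v) (h : ∀ n ∈ s, ¬(u ≤ d n ∧ d n < v)) :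
    fFun d a v - fFun d a u ≤ ε := by
  have hdiff : fFun d a v - fFun d a u
      = ∑' n, ((if d n < v then a n else 0) - (if d n < u then a n else 0)) :=
    (Summable.tsum_sub (aux_summable d a ha_pos hA v) (aux_summable d a ha_pos hA u)).symm
  rw [hdiff]
  apply Summable.tsum_le_of_sum_le ((aux_summable d a ha_pos hA v).sub (aux_summable d a ha_pos hA u))
  intro t
  have key : ∀ n, (if d n < v then a n else 0) - (if d n < u then a n else 0)
      = if u ≤ d n ∧ d n < v then a n else 0 := by
    intro n
    by_cases h1 : d n < v <;> by_cases h2 : d n < u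
    · simp [h1, h2, not_le.mpr h2]
    · simp [h1, h2, not_lt.mp h2]
    · exact absurd (lt_of_lt_of_le h2 huv) h1
    · simp [h1, h2]
  rw [Finset.sum_congr rfl (fun n _ => key n), ← Finset.sum_filter]
  refine le_of_lt (hs _ ?_)
  rw [Finset.disjoint_left]
  intro n hn hns
  rw [Finset.mem_filter] at hn
  exact h n hns hn.2

lemma aux_contAt (d a : ℕ → ℝ) (ha_pos : ∀ n, 0 < a n) (hA : Summable a)
    {c : ℝ} (hc : c ∉ Set.range d) : ContinuousAt (fFun d a) c := by
  rw [Metric.continuousAt_iff]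
  intro ε hε
  obtain ⟨s, hs⟩ := summable_iff_vanishing.mp hA (Set.Iio (ε / 2))
    (Iio_mem_nhds (by positivity))
  have hs' : ∀ t : Finset ℕ, Disjoint t s → ∑ n ∈ t, a n < ε / 2 := fun t ht => hs t ht
  have hdn : ∀ n ∈ s, 0 < |d n - c| := by
    intro n _
    rw [abs_pos, sub_ne_zero]
    exact fun h => hc ⟨n, h⟩
  obtain ⟨δ, hδ, hδle⟩ : ∃ δ > 0, ∀ n ∈ s, δ ≤ |d n - c| := by
    by_cases hne : s.Nonempty
    · refine ⟨s.inf' hne (fun n => |d n - c|), ?_, fun n hn => Finset.inf'_le _ hn⟩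
      show 0 < _
      rw [Finset.lt_inf'_iff]
      exact hdn
    · exact ⟨1, one_pos, fun n hn => absurd ⟨n, hn⟩ hne⟩
  refine ⟨δ, hδ, fun x hx => ?_⟩
  rw [Real.dist_eq] at hx
  rcases le_total c x with hcx | hxc
  · have hmono := aux_mono d a ha_pos hA hcx
    rw [Real.dist_eq, abs_of_nonneg (sub_nonneg.mpr hmono)]
    have hbound : fFun d a x - fFun d a c ≤ ε / 2 := by
      apply aux_diff_bound d a ha_pos hA s (ε / 2) hs' hcx
      intro n hn ⟨h1, h2⟩
      have hne : d n ≠ c := fun h => hc ⟨n, h⟩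
      have h1' : c < d n := lt_of_le_of_ne h1 (Ne.symm hne)
      have : |d n - c| < δ := by
        rw [abs_of_pos (by linarith)]
        have := abs_lt.mp hx
        linarith
      exact absurd (hδle n hn) (not_le.mpr this)
    linarith
  · have hmono := aux_mono d a ha_pos hA hxc
    rw [Real.dist_eq, abs_of_nonpos (sub_nonpos.mpr hmono)]
    have hbound : fFun d a c - fFun d a x ≤ ε / 2 := by
      apply aux_diff_bound d a ha_pos hA s (ε / 2) hs' hxc
      intro n hn ⟨h1, h2⟩
      have : |d n - c| < δ := by
        rw [abs_of_neg (by linarith)]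
        have := abs_lt.mp hx
        linarith
      exact absurd (hδle n hn) (not_le.mpr this)
    linarith

/-- `f` is non-decreasing on `C`, and `f` (as a function on the subspace `C ⊆ ℝ`) is
continuous at `c ∈ C` if and only if `c ∉ D = {d n : n ∈ ℕ}`. -/
theorem stmt6 (d a : ℕ → ℝ) (hd_inj : Function.Injective d)
    (hd_ne : ∀ n, IsNonEndpoint (d n)) (hd_dense : cantorSet ⊆ closure (Set.range d))
    (ha_pos : ∀ n, 0 < a n) (ha_sum : ∑' n, a n = 1) :
    MonotoneOn (fFun d a) cantorSet ∧
    ∀ c ∈ cantorSet, (ContinuousWithinAt (fFun d a) cantorSet c ↔ c ∉ Set.range d) := by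
  have hA : Summable a := by
    by_contra h
    rw [tsum_eq_zero_of_not_summable h] at ha_sum
    norm_num at ha_sum
  constructor
  · exact fun x _ y _ hxy => aux_mono d a ha_pos hA hxy
  · intro c hcC
    constructor
    · intro hcont
      rintro ⟨m, rfl⟩
      set c := d m
      set S : Set ℝ := {x | x ∈ cantorSet ∧ c < x} with hS
      have hclos : c ∈ closure S := by
        rw [Metric.mem_closure_iff]
        intro ε hε
        obtain ⟨y, hyIoo, hyC⟩ := ((hd_ne m).2 ε hε).2
        refine ⟨y, ⟨hyC, hyIoo.1⟩, ?_⟩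
        rw [Real.dist_eq, abs_lt]
        constructor <;> [linarith [hyIoo.2]; linarith [hyIoo.1]]
      have hnb : (nhdsWithin c S).NeBot := mem_closure_iff_nhdsWithin_neBot.mp hclos
      have ht : Filter.Tendsto (fFun d a) (nhdsWithin c S) (nhds (fFun d a c)) :=
        hcont.mono (fun x hx => hx.1)
      have hev : ∀ᶠ x in nhdsWithin c S, fFun d a c + a m ≤ fFun d a x :=
        eventually_mem_nhdsWithin.mono (fun x hx => aux_jump d a ha_pos hA m hx.2)
      have := ge_of_tendsto ht hev
      linarith [ha_pos m]
    · intro hc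
      exact (aux_contAt d a ha_pos hA hc).continuousWithinAt
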